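/- (General Quantum Lovász Local Lemma) Let 𝔼 = E_1,…,E_n be a sequence of events in a finite-dimensional complex Hilbert space H, where E_i is defined by measurement M_i for each i, let ρ be a density operator on H, let Σ = (ρ; M_1,…,M_n) be the corresponding test, and let x_1,…,x_n ∈ (0,1]. For each 1 ≤ i ≤ n set s_i = max{ j < i : NInd_{Σ,𝔼}(i|j) } (with s_i = 0 if no such j exists), and assume Pr_Σ[E_i] ≤ x_i · ∏_{j=s_i+1}^{i−1}(1 − x_j) for all 1 ≤ i ≤ n, and that Pr_Σ[Ē_1,…,Ē_{i−1}] ≠ 0 for each 1 ≤ i ≤ n. Then Pr_Σ[Ē_1,…,Ē_n] ≥ ∏_{i=1}^{n}(1 − x_i). -/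

import Mathlib

open Matrix Finset
open scoped ComplexOrder

/-- A quantum measurement on `ℂ^d`: a finite family of operators indexed by the
outcomes in `spec`, satisfying the completeness condition `∑ Mₘ† Mₘ = I`. -/
structure Measurement (d : ℕ) where
  spec : Finset ℕ
  op : ℕ → Matrix (Fin d) (Fin d) ℂ
  complete : ∑ m ∈ spec, (op m)ᴴ * op m = 1

/-- An event `{M ∈ A}`: a measurement together with a subset of its spectrum. -/
structure QEvent (d : ℕ) where
  meas : Measurement d
  A : Finset ℕ
  sub : A ⊆ meas.spec

/-- The super-operator defined by an event: `ρ ↦ ∑_{m ∈ A} Mₘ ρ Mₘ†`. -/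
noncomputable def QEvent.superop {d : ℕ} (E : QEvent d) (ρ : Matrix (Fin d) (Fin d) ℂ) :
    Matrix (Fin d) (Fin d) ℂ :=
  ∑ m ∈ E.A, E.meas.op m * ρ * (E.meas.op m)ᴴ

/-- The probability of a sequence of events in state `ρ`:
`Pr_ρ[E₁,…,E_k] = tr(𝓔_k(⋯𝓔₁(ρ)⋯))`. -/
noncomputable def PrSeq {d : ℕ} (ρ : Matrix (Fin d) (Fin d) ℂ) (Es : List (QEvent d)) : ℝ :=
  (Matrix.trace (Es.foldl (fun σ E => E.superop σ) ρ)).re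

/-- A density operator: positive semidefinite with trace one. -/
def IsDensityOp {d : ℕ} (ρ : Matrix (Fin d) (Fin d) ℂ) : Prop :=
  ρ.PosSemidef ∧ ρ.trace = 1

/-- A projective measurement: every operator is an orthogonal projection and
distinct operators are orthogonal. -/
def Measurement.IsProjective {d : ℕ} (M : Measurement d) : Prop :=
  (∀ m ∈ M.spec, (M.op m)ᴴ = M.op m ∧ M.op m * M.op m = M.op m) ∧
  ∀ m ∈ M.spec, ∀ m' ∈ M.spec, m ≠ m' → M.op m * M.op m' = 0

/-- The complete event `I_M = {M ∈ spec(M)}`. -/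
def completeEvent {d : ℕ} (M : Measurement d) : QEvent d :=
  ⟨M, M.spec, subset_rfl⟩

/-- The complement `Ē = {M ∈ spec(M) \ A}` of the event `E = {M ∈ A}`. -/
def QEvent.compl {d : ℕ} (E : QEvent d) : QEvent d :=
  ⟨E.meas, E.meas.spec \ E.A, Finset.sdiff_subset⟩

/-- Conditional probability `Pr_ρ[𝔽|𝔼] = Pr_ρ[𝔼,𝔽] / Pr_ρ[𝔼]`. -/
noncomputable def condPrSeq {d : ℕ} (ρ : Matrix (Fin d) (Fin d) ℂ) (Fs Es : List (QEvent d)) : ℝ :=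
  PrSeq ρ (Es ++ Fs) / PrSeq ρ Es

/-- The list of events realizing `Pr_Σ[𝔼_K]` in the test `Σ = (ρ; M₁,…,M_n)`:
all measurements `M₁,…,M_{max K}` are performed; at the indices `i ∈ K` the event
`E i` is used, while at the remaining indices the complete event `I_{M_i}` is used. -/
noncomputable def testList {d : ℕ} (n : ℕ) (Ms : ℕ → Measurement d) (E : ℕ → QEvent d)
    (K : Finset ℕ) : List (QEvent d) :=
  ((List.range' 1 n).filter (fun i => decide (∃ k ∈ K, i ≤ k))).map
    (fun i => if i ∈ K then E i else completeEvent (Ms i))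

/-- The probability `Pr_Σ[𝔼_K]` of the subsequence of events indexed by `K` in the
test `Σ = (ρ; M₁,…,M_n)`. -/
noncomputable def PrTest {d : ℕ} (ρ : Matrix (Fin d) (Fin d) ℂ) (n : ℕ)
    (Ms : ℕ → Measurement d) (E : ℕ → QEvent d) (K : Finset ℕ) : ℝ :=
  PrSeq ρ (testList n Ms E K)

/-- The conditional probability `Pr_Σ[𝔼_L | 𝔼_K]` in a test (for `K < L`, the
concatenation `𝔼_K,𝔼_L` is the subsequence indexed by `K ∪ L`). -/
noncomputable def condPrTest {d : ℕ} (ρ : Matrix (Fin d) (Fin d) ℂ) (n : ℕ)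
    (Ms : ℕ → Measurement d) (E : ℕ → QEvent d) (L K : Finset ℕ) : ℝ :=
  PrTest ρ n Ms E (K ∪ L) / PrTest ρ n Ms E K

/-- Independence `Ind_Σ(E_i | 𝔼_J; 𝔼_{K∖J})`: `Pr_Σ[E_i|𝔼_K] = Pr_Σ[E_i|𝔼_{K∖J}]`. -/
def IndTest {d : ℕ} (ρ : Matrix (Fin d) (Fin d) ℂ) (n : ℕ)
    (Ms : ℕ → Measurement d) (E : ℕ → QEvent d) (i : ℕ) (J K : Finset ℕ) : Prop :=
  condPrTest ρ n Ms E {i} K = condPrTest ρ n Ms E {i} (K \ J)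

/-- Negative independence `NInd_Σ(E_i | 𝔼_K)`: `Pr_Σ[E_i | Ē_K] = Pr_Σ[E_i]`,
where in the conditioning sequence every event of `𝔼_K` is replaced by its complement. -/
def NIndTest {d : ℕ} (ρ : Matrix (Fin d) (Fin d) ℂ) (n : ℕ)
    (Ms : ℕ → Measurement d) (E : ℕ → QEvent d) (i : ℕ) (K : Finset ℕ) : Prop :=
  condPrTest ρ n Ms (Function.update (fun k => (E k).compl) i (E i)) {i} K
    = PrTest ρ n Ms E {i}

/-- `NInd_{Σ,𝔼}(k|l)`: `NInd_Σ(E_k | E₁,…,E_j)` for all `1 ≤ j ≤ l`. -/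
def NIndSeq {d : ℕ} (ρ : Matrix (Fin d) (Fin d) ℂ) (n : ℕ)
    (Ms : ℕ → Measurement d) (E : ℕ → QEvent d) (k l : ℕ) : Prop :=
  ∀ j, 1 ≤ j → j ≤ l → NIndTest ρ n Ms E k (Finset.Icc 1 j)

namespace QLLL

variable {d : ℕ}

lemma psd_sum {s : Finset ℕ} {f : ℕ → Matrix (Fin d) (Fin d) ℂ}
    (h : ∀ m ∈ s, (f m).PosSemidef) : (∑ m ∈ s, f m).PosSemidef := by
  classical
  induction s using Finset.induction with
  | empty => simpa using Matrix.PosSemidef.zero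
  | insert _ _ hx ih =>
    rw [Finset.sum_insert hx]
    exact (h _ (Finset.mem_insert_self _ _)).add (ih fun m hm => h m (Finset.mem_insert_of_mem hm))

lemma superop_posSemidef (E : QEvent d) {σ : Matrix (Fin d) (Fin d) ℂ} (h : σ.PosSemidef) :
    (E.superop σ).PosSemidef := by
  unfold QEvent.superop
  exact psd_sum fun m _ => h.mul_mul_conjTranspose_same _

lemma foldl_psd : ∀ (l : List (QEvent d)) {σ : Matrix (Fin d) (Fin d) ℂ}, σ.PosSemidef →
    (l.foldl (fun σ E => E.superop σ) σ).PosSemidef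
  | [], _, h => h
  | E :: l, σ, h => foldl_psd l (superop_posSemidef E h)

lemma diag_re_nonneg {σ : Matrix (Fin d) (Fin d) ℂ} (h : σ.PosSemidef) (i : Fin d) :
    0 ≤ (σ i i).re := by
  have h2 := h.dotProduct_mulVec_nonneg (Pi.single i 1)
  simp [dotProduct, Matrix.mulVec, Pi.single_apply, apply_ite] at h2
  exact (Complex.le_def.mp h2).1

lemma trace_re_nonneg {σ : Matrix (Fin d) (Fin d) ℂ} (h : σ.PosSemidef) : 0 ≤ σ.trace.re := by
  rw [Matrix.trace, Complex.re_sum]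
  exact Finset.sum_nonneg fun i _ => diag_re_nonneg h i

lemma superop_add (E : QEvent d) (σ τ : Matrix (Fin d) (Fin d) ℂ) :
    E.superop (σ + τ) = E.superop σ + E.superop τ := by
  unfold QEvent.superop
  simp [mul_add, add_mul, Finset.sum_add_distrib]

lemma foldl_add : ∀ (l : List (QEvent d)) (σ τ : Matrix (Fin d) (Fin d) ℂ),
    l.foldl (fun σ E => E.superop σ) (σ + τ) =
      l.foldl (fun σ E => E.superop σ) σ + l.foldl (fun σ E => E.superop σ) τ
  | [], _, _ => rfl
  | E :: l, σ, τ => by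
    simp only [List.foldl_cons, superop_add]
    exact foldl_add l _ _

lemma compl_add (E : QEvent d) (σ : Matrix (Fin d) (Fin d) ℂ) :
    E.compl.superop σ + E.superop σ = (completeEvent E.meas).superop σ :=
  Finset.sum_sdiff E.sub

lemma trace_complete (M : Measurement d) (σ : Matrix (Fin d) (Fin d) ℂ) :
    ((completeEvent M).superop σ).trace = σ.trace := by
  unfold QEvent.superop completeEvent
  simp only [Matrix.trace_sum]
  calc ∑ m ∈ M.spec, (M.op m * σ * (M.op m)ᴴ).trace
      = ∑ m ∈ M.spec, ((M.op m)ᴴ * M.op m * σ).trace := by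
        exact Finset.sum_congr rfl fun m _ => Matrix.trace_mul_cycle _ _ _
    _ = ((∑ m ∈ M.spec, (M.op m)ᴴ * M.op m) * σ).trace := by
        rw [Finset.sum_mul, Matrix.trace_sum]
    _ = σ.trace := by rw [M.complete, one_mul]

lemma PrSeq_append (ρ : Matrix (Fin d) (Fin d) ℂ) (l1 l2 : List (QEvent d)) :
    PrSeq ρ (l1 ++ l2) = PrSeq (l1.foldl (fun σ E => E.superop σ) ρ) l2 := by
  simp [PrSeq, List.foldl_append]

lemma PrSeq_cons (ρ : Matrix (Fin d) (Fin d) ℂ) (E : QEvent d) (l : List (QEvent d)) :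
    PrSeq ρ (E :: l) = PrSeq (E.superop ρ) l := rfl

lemma PrSeq_nonneg {σ : Matrix (Fin d) (Fin d) ℂ} (h : σ.PosSemidef) (l : List (QEvent d)) :
    0 ≤ PrSeq σ l :=
  trace_re_nonneg (foldl_psd l h)

lemma PrSeq_add (σ τ : Matrix (Fin d) (Fin d) ℂ) (l : List (QEvent d)) :
    PrSeq (σ + τ) l = PrSeq σ l + PrSeq τ l := by
  simp [PrSeq, foldl_add, Matrix.trace_add]

lemma PrSeq_compl_le (E : QEvent d) {σ : Matrix (Fin d) (Fin d) ℂ} (h : σ.PosSemidef)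
    (l : List (QEvent d)) :
    PrSeq (E.compl.superop σ) l ≤ PrSeq ((completeEvent E.meas).superop σ) l := by
  rw [← compl_add, PrSeq_add]
  have := PrSeq_nonneg (superop_posSemidef E h) l
  linarith

lemma mid_le (Ms : ℕ → Measurement d) (E : ℕ → QEvent d) :
    ∀ (b a : ℕ) (tail : List (QEvent d)) (σ : Matrix (Fin d) (Fin d) ℂ), σ.PosSemidef →
    (∀ j, a ≤ j → j < a + b → (E j).meas = Ms j) →
    PrSeq σ ((List.range' a b).map (fun k => (E k).compl) ++ tail) ≤
      PrSeq σ ((List.range' a b).map (fun k => completeEvent (Ms k)) ++ tail)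
  | 0, a, tail, σ, hσ, _ => le_rfl
  | b+1, a, tail, σ, hσ, hme => by
    rw [List.range'_succ, List.map_cons, List.map_cons, List.cons_append, List.cons_append,
      PrSeq_cons, PrSeq_cons]
    calc PrSeq ((E a).compl.superop σ)
          ((List.range' (a+1) b).map (fun k => (E k).compl) ++ tail)
        ≤ PrSeq ((completeEvent (E a).meas).superop σ)
          ((List.range' (a+1) b).map (fun k => (E k).compl) ++ tail) := PrSeq_compl_le _ hσ _
      _ = PrSeq ((completeEvent (Ms a)).superop σ)
          ((List.range' (a+1) b).map (fun k => (E k).compl) ++ tail) := by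
          rw [hme a le_rfl (by omega)]
      _ ≤ _ := mid_le Ms E b (a+1) tail _ (superop_posSemidef _ hσ)
          (fun j hj1 hj2 => hme j (by omega) (by omega))

lemma range'_concat1 (m : ℕ) : List.range' 1 (m + 1) = List.range' 1 m ++ [m + 1] := by
  have := List.range'_concat (step := 1) (s := 1) (n := m)
  simpa [add_comm] using this

lemma testList_empty (n : ℕ) (Ms : ℕ → Measurement d) (E : ℕ → QEvent d) :
    testList n Ms E ∅ = [] := by
  unfold testList
  simp

lemma testList_eq (n : ℕ) (Ms : ℕ → Measurement d) (E : ℕ → QEvent d) (K : Finset ℕ) (M : ℕ)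
    (hM : M ∈ K) (hmax : ∀ k ∈ K, k ≤ M) (hn : M ≤ n) :
    testList n Ms E K =
      (List.range' 1 M).map (fun i => if i ∈ K then E i else completeEvent (Ms i)) := by
  unfold testList
  congr 1
  have hsplit : List.range' 1 n = List.range' 1 M ++ List.range' (1 + M) (n - M) := by
    have h := List.range'_append (s := 1) (m := M) (n := n - M) (step := 1)
    simp only [one_mul] at h
    rw [Nat.add_sub_of_le hn] at h
    exact h.symm
  rw [hsplit, List.filter_append]
  have h1 : (List.range' 1 M).filter (fun i => decide (∃ k ∈ K, i ≤ k)) = List.range' 1 M := by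
    apply List.filter_eq_self.mpr
    intro a ha
    rw [List.mem_range'_1] at ha
    simp only [decide_eq_true_eq]
    exact ⟨M, hM, by omega⟩
  have h2 : (List.range' (1 + M) (n - M)).filter (fun i => decide (∃ k ∈ K, i ≤ k)) = [] := by
    apply List.filter_eq_nil_iff.mpr
    intro a ha
    rw [List.mem_range'_1] at ha
    simp only [decide_eq_true_eq]
    rintro ⟨k, hk, hak⟩
    have := hmax k hk
    omega
  rw [h1, h2, List.append_nil]

lemma testList_Icc (n : ℕ) (Ms : ℕ → Measurement d) (E : ℕ → QEvent d) (m : ℕ) (hm : m ≤ n) :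
    testList n Ms E (Finset.Icc 1 m) = (List.range' 1 m).map E := by
  rcases Nat.eq_zero_or_pos m with h0 | h1
  · subst h0
    rw [show Finset.Icc 1 0 = ∅ by simp, testList_empty]
    rfl
  · rw [testList_eq n Ms E _ m (by simp [Finset.mem_Icc]; omega)
      (fun k hk => by simp [Finset.mem_Icc] at hk; omega) hm]
    apply List.map_congr_left
    intro a ha
    rw [List.mem_range'_1] at ha
    rw [if_pos (by simp [Finset.mem_Icc]; omega)]

lemma testList_single (n : ℕ) (Ms : ℕ → Measurement d) (E : ℕ → QEvent d) (i : ℕ)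
    (h1 : 1 ≤ i) (h2 : i ≤ n) :
    testList n Ms E {i} =
      (List.range' 1 (i - 1)).map (fun j => completeEvent (Ms j)) ++ [E i] := by
  rw [testList_eq n Ms E _ i (Finset.mem_singleton_self i)
    (fun k hk => by simp at hk; omega) h2]
  obtain ⟨j, rfl⟩ : ∃ j, i = j + 1 := ⟨i - 1, by omega⟩
  rw [range'_concat1, List.map_append]
  congr 1
  · apply List.map_congr_left
    intro a ha
    rw [List.mem_range'_1] at ha
    rw [if_neg (by simp; omega)]
  · simp

lemma testList_union (n : ℕ) (Ms : ℕ → Measurement d) (G : ℕ → QEvent d) (s i : ℕ)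
    (hsl : s < i) (h1 : 1 ≤ i) (h2 : i ≤ n) :
    testList n Ms G (Finset.Icc 1 s ∪ {i}) =
      (List.range' 1 s).map G ++
        (List.range' (s + 1) (i - 1 - s)).map (fun j => completeEvent (Ms j)) ++ [G i] := by
  rw [testList_eq n Ms G _ i (by simp)
    (fun k hk => by simp [Finset.mem_Icc] at hk; omega) h2]
  have hsplit : List.range' 1 i = (List.range' 1 s ++ List.range' (s + 1) (i - 1 - s)) ++ [i] := by
    have h := List.range'_append (s := 1) (m := s) (n := i - 1 - s) (step := 1)
    simp only [one_mul] at h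
    rw [show 1 + s = s + 1 by omega] at h
    rw [show s + (i - 1 - s) = i - 1 by omega] at h
    rw [h]
    obtain ⟨j, rfl⟩ : ∃ j, i = j + 1 := ⟨i - 1, by omega⟩
    simpa using range'_concat1 j
  rw [hsplit, List.map_append, List.map_append]
  congr 1
  congr 1
  · apply List.map_congr_left
    intro a ha
    rw [List.mem_range'_1] at ha
    rw [if_pos (by simp [Finset.mem_Icc]; omega)]
  · apply List.map_congr_left
    intro a ha
    rw [List.mem_range'_1] at ha
    rw [if_neg (by simp [Finset.mem_Icc]; omega)]
  · simp

end QLLL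

open QLLL

/-- General Quantum Lovász Local Lemma: with
`s_i = max{ j < i : NInd_{Σ,𝔼}(i|j) }` (`s_i = 0` if no such `j` exists, realized via
`sSup` on `ℕ`), if `Pr_Σ[E_i] ≤ x_i · ∏_{j=s_i+1}^{i−1}(1 − x_j)` for all `1 ≤ i ≤ n`
and `Pr_Σ[Ē₁,…,Ē_{i−1}] ≠ 0` for each `1 ≤ i ≤ n`, then
`Pr_Σ[Ē₁,…,Ē_n] ≥ ∏_{i=1}^{n}(1 − x_i)`. -/
theorem general_quantum_lll {d : ℕ} (ρ : Matrix (Fin d) (Fin d) ℂ) (hρ : IsDensityOp ρ)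
    (n : ℕ) (Ms : ℕ → Measurement d) (E : ℕ → QEvent d)
    (hE : ∀ k ∈ Finset.Icc 1 n, (E k).meas = Ms k)
    (x : ℕ → ℝ) (hx : ∀ i ∈ Finset.Icc 1 n, x i ∈ Set.Ioc (0 : ℝ) 1)
    (s : ℕ → ℕ)
    (hs : ∀ i ∈ Finset.Icc 1 n,
      s i = sSup {j : ℕ | 0 < j ∧ j < i ∧ NIndSeq ρ n Ms E i j})
    (hbound : ∀ i ∈ Finset.Icc 1 n,
      PrTest ρ n Ms E {i} ≤ x i * ∏ j ∈ Finset.Ioo (s i) i, (1 - x j))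
    (hne : ∀ i ∈ Finset.Icc 1 n,
      PrTest ρ n Ms (fun k => (E k).compl) (Finset.Ico 1 i) ≠ 0) :
    PrTest ρ n Ms (fun k => (E k).compl) (Finset.Icc 1 n)
      ≥ ∏ i ∈ Finset.Icc 1 n, (1 - x i) := by
  classical
  set F : ℕ → QEvent d := fun k => (E k).compl with hF
  set Pl : ℕ → ℝ := fun m => PrSeq ρ ((List.range' 1 m).map F) with hPl
  set T : ℕ → ℝ := fun i => PrSeq ρ ((List.range' 1 (i - 1)).map F ++ [E i]) with hT
  have hPl0 : Pl 0 = 1 := by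
    simp only [hPl, List.range'_zero, List.map_nil, PrSeq, List.foldl_nil, hρ.2]
    rfl
  have hPl_nonneg : ∀ m, 0 ≤ Pl m := fun m => PrSeq_nonneg hρ.1 _
  have hPstep : ∀ m, Pl (m + 1) = Pl m - T (m + 1) := by
    intro m
    have e1 : Pl (m + 1) =
        PrSeq (((List.range' 1 m).map F).foldl (fun σ E => E.superop σ) ρ) [F (m + 1)] := by
      simp only [hPl]
      rw [range'_concat1, List.map_append, PrSeq_append]
      rfl
    have e2 : T (m + 1) =
        PrSeq (((List.range' 1 m).map F).foldl (fun σ E => E.superop σ) ρ) [E (m + 1)] := by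
      simp only [hT, Nat.add_sub_cancel]
      rw [PrSeq_append]
    have e3 : Pl m = (Matrix.trace (((List.range' 1 m).map F).foldl
        (fun σ E => E.superop σ) ρ)).re := rfl
    set σm := ((List.range' 1 m).map F).foldl (fun σ E => E.superop σ) ρ
    have e4 : PrSeq σm [F (m + 1)] + PrSeq σm [E (m + 1)] = (Matrix.trace σm).re := by
      show (Matrix.trace ((F (m + 1)).superop σm)).re
          + (Matrix.trace ((E (m + 1)).superop σm)).re = _
      rw [← Complex.add_re, ← Matrix.trace_add, hF]
      rw [compl_add (E (m + 1)) σm, trace_complete]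
    rw [e1, e2, e3]
    linarith
  have hPtest : ∀ m, m ≤ n → PrTest ρ n Ms F (Finset.Icc 1 m) = Pl m := by
    intro m hm
    rw [PrTest, testList_Icc n Ms F m hm]
  have hne' : ∀ m, m < n → Pl m ≠ 0 := by
    intro m hm
    have h := hne (m + 1) (by simp [Finset.mem_Icc]; omega)
    rwa [show Finset.Ico 1 (m + 1) = Finset.Icc 1 m from rfl, hPtest m (by omega)] at h
  have hp : ∀ i, 1 ≤ i → i ≤ n →
      PrTest ρ n Ms E {i} = PrSeq ρ ((List.range' 1 (i - 1)).map (fun j => completeEvent (Ms j)) ++ [E i]) := by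
    intro i h1 h2
    rw [PrTest, testList_single n Ms E i h1 h2]
  -- key inequality
  have key : ∀ i, 1 ≤ i → i ≤ n → T i ≤ x i * Pl (i - 1) := by
    intro i
    induction i using Nat.strong_induction_on with
    | _ i ih =>
    intro h1 h2
    have hiI : i ∈ Finset.Icc 1 n := by simp [Finset.mem_Icc]; omega
    have hsi := hs i hiI
    have hslt : s i < i ∧ (s i = 0 ∨ (NIndTest ρ n Ms E i (Finset.Icc 1 (s i)) ∧ 1 ≤ s i)) := by
      rcases Set.eq_empty_or_nonempty {j : ℕ | 0 < j ∧ j < i ∧ NIndSeq ρ n Ms E i j} with he | hne2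
      · rw [he] at hsi
        rw [hsi, csSup_empty]
        simp only [Nat.bot_eq_zero]
        exact ⟨by omega, Or.inl trivial⟩
      · have hb : BddAbove {j : ℕ | 0 < j ∧ j < i ∧ NIndSeq ρ n Ms E i j} :=
          ⟨i, fun j hj => hj.2.1.le⟩
        have hm := Nat.sSup_mem hne2 hb
        rw [← hsi] at hm
        exact ⟨hm.2.1, Or.inr ⟨hm.2.2 (s i) hm.1 le_rfl, hm.1⟩⟩
    obtain ⟨hsl, hcase⟩ := hslt
    set s' := s i with hs'
    -- the NInd-equality
    have hW : PrSeq ρ ((List.range' 1 s').map F ++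
          ((List.range' (s' + 1) (i - 1 - s')).map (fun j => completeEvent (Ms j)) ++ [E i]))
        = PrTest ρ n Ms E {i} * Pl s' := by
      rcases hcase with h0 | ⟨hNInd, hs1⟩
      · rw [h0]
        simp only [List.range'_zero, List.map_nil, List.nil_append, Nat.sub_zero, zero_add]
        rw [hp i h1 h2, hPl0, mul_one]
      · rw [NIndTest, condPrTest] at hNInd
        have hG1 : testList n Ms (Function.update (fun k => (E k).compl) i (E i))
            (Finset.Icc 1 s' ∪ {i}) =
            (List.range' 1 s').map F ++
              ((List.range' (s' + 1) (i - 1 - s')).map (fun j => completeEvent (Ms j)) ++ [E i]) := by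
          have hseg1 : List.map (Function.update (fun k => (E k).compl) i (E i))
              (List.range' 1 s') = List.map F (List.range' 1 s') :=
            List.map_congr_left (fun a ha => by
              rw [List.mem_range'_1] at ha
              exact Function.update_of_ne (by omega) _ _)
          rw [testList_union n Ms _ s' i hsl h1 h2, List.append_assoc, Function.update_self,
            hseg1]
        have hG2 : testList n Ms (Function.update (fun k => (E k).compl) i (E i))
            (Finset.Icc 1 s') = (List.range' 1 s').map F := by
          rw [testList_Icc n Ms _ s' (by omega)]
          exact List.map_congr_left (fun a ha => by
            rw [List.mem_range'_1] at ha
            exact Function.update_of_ne (by omega) _ _)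
        rw [PrTest, PrTest, hG1, hG2] at hNInd
        have hPs : PrSeq ρ ((List.range' 1 s').map F) = Pl s' := rfl
        rw [hPs] at hNInd
        rw [← hNInd, div_mul_cancel₀]
        exact hne' s' (by omega)
    -- monotone replacement
    have hTW : T i ≤ PrSeq ρ ((List.range' 1 s').map F ++
        ((List.range' (s' + 1) (i - 1 - s')).map (fun j => completeEvent (Ms j)) ++ [E i])) := by
      have hsplit : List.range' 1 (i - 1) =
          List.range' 1 s' ++ List.range' (s' + 1) (i - 1 - s') := by
        have h := List.range'_append (s := 1) (m := s') (n := i - 1 - s') (step := 1)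
        simp only [one_mul] at h
        rw [show 1 + s' = s' + 1 by omega, show s' + (i - 1 - s') = i - 1 by omega] at h
        exact h.symm
      simp only [hT]
      have hap : ∀ l2, PrSeq ρ (List.map F (List.range' 1 s') ++ l2) =
          PrSeq (((List.range' 1 s').map F).foldl (fun σ E => E.superop σ) ρ) l2 :=
        fun l2 => PrSeq_append _ _ _
      rw [hsplit, List.map_append, List.append_assoc, hap, hap]
      exact mid_le Ms E (i - 1 - s') (s' + 1) [E i] _ (foldl_psd _ hρ.1)
        (fun j hj1 hj2 => hE j (by simp [Finset.mem_Icc]; omega))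
    -- product chain
    have hIoo : Finset.Ioo s' i = Finset.Ioc s' (i - 1) := by
      ext j
      simp only [Finset.mem_Ioo, Finset.mem_Ioc]
      omega
    have chain : ∀ m, s' ≤ m → m ≤ i - 1 →
        (∏ j ∈ Finset.Ioc s' m, (1 - x j)) * Pl s' ≤ Pl m := by
      intro m
      induction m with
      | zero =>
        intro hsm _
        have : s' = 0 := by omega
        simp [this, hPl0]
      | succ m ihm =>
        intro hsm hmi
        rcases Nat.eq_or_lt_of_le hsm with heq | hlt
        · rw [heq]
          simp
        · have hm1 : s' ≤ m := by omega
          have hkey := ih (m + 1) (by omega) (by omega) (by omega)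
          have hxm := hx (m + 1) (by simp [Finset.mem_Icc]; omega)
          rw [Set.mem_Ioc] at hxm
          have hPm1 : (1 - x (m + 1)) * Pl m ≤ Pl (m + 1) := by
            rw [hPstep m]
            have : T (m + 1) ≤ x (m + 1) * Pl m := by
              simpa using hkey
            nlinarith [hPl_nonneg m]
          calc (∏ j ∈ Finset.Ioc s' (m + 1), (1 - x j)) * Pl s'
              = (1 - x (m + 1)) * ((∏ j ∈ Finset.Ioc s' m, (1 - x j)) * Pl s') := by
                rw [Finset.prod_Ioc_succ_top hm1]; ring
            _ ≤ (1 - x (m + 1)) * Pl m :=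
                mul_le_mul_of_nonneg_left (ihm hm1 (by omega)) (by linarith [hxm.2])
            _ ≤ Pl (m + 1) := hPm1
    have hfin : (∏ j ∈ Finset.Ioc s' (i - 1), (1 - x j)) * Pl s' ≤ Pl (i - 1) :=
      chain (i - 1) (by omega) le_rfl
    have hq := hbound i hiI
    rw [hIoo] at hq
    have hxi := hx i hiI
    rw [Set.mem_Ioc] at hxi
    calc T i ≤ PrSeq ρ ((List.range' 1 s').map F ++
          ((List.range' (s' + 1) (i - 1 - s')).map (fun j => completeEvent (Ms j)) ++ [E i])) := hTW
      _ = PrTest ρ n Ms E {i} * Pl s' := hW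
      _ ≤ (x i * ∏ j ∈ Finset.Ioc s' (i - 1), (1 - x j)) * Pl s' :=
          mul_le_mul_of_nonneg_right hq (hPl_nonneg s')
      _ = x i * ((∏ j ∈ Finset.Ioc s' (i - 1), (1 - x j)) * Pl s') := by ring
      _ ≤ x i * Pl (i - 1) := mul_le_mul_of_nonneg_left hfin hxi.1.le
  -- final chain
  have final : ∀ m, m ≤ n → (∏ j ∈ Finset.Icc 1 m, (1 - x j)) ≤ Pl m := by
    intro m
    induction m with
    | zero => intro _; simp [hPl0]
    | succ m ihm =>
      intro hmn
      have h1 := ihm (by omega)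
      have hk := key (m + 1) (by omega) hmn
      simp only [Nat.add_sub_cancel] at hk
      have hxm := hx (m + 1) (by simp [Finset.mem_Icc]; omega)
      rw [Set.mem_Ioc] at hxm
      have hprod : ∏ j ∈ Finset.Icc 1 (m + 1), (1 - x j)
          = (∏ j ∈ Finset.Icc 1 m, (1 - x j)) * (1 - x (m + 1)) :=
        Finset.prod_Icc_succ_top (by omega) _
      rw [hPstep m, hprod]
      have h2 : (∏ j ∈ Finset.Icc 1 m, (1 - x j)) * (1 - x (m + 1))
          ≤ Pl m * (1 - x (m + 1)) :=
        mul_le_mul_of_nonneg_right h1 (by linarith [hxm.2])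
      nlinarith
  rw [ge_iff_le, hPtest n le_rfl]
  exact final n le_rfl
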